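/- arXiv:1305.2153 — 3 statements merged into one kernel-verified Lean document; each statement's English description precedes it below -/
import Mathlib

section
/- For every even integer k ≥ 0, the k-th moment of the semicircle distribution equals the Catalan number: ∫_{-2}^{2} x^k · (1/(2π))·√(4 - x²) dx = C(k, k/2)/(k/2 + 1), and for odd k the integral is 0. -/
open Real intervalIntegral

lemma sc_cont : Continuous (fun x : ℝ => Real.sqrt (4 - x ^ 2)) := by
  exact Real.continuous_sqrt.comp (by continuity)

lemma intInt (n : ℕ) : IntervalIntegrable
    (fun x : ℝ => x ^ n * Real.sqrt (4 - x ^ 2)) MeasureTheory.volume (-2) 2 :=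
  (Continuous.mul (continuous_pow n) sc_cont).intervalIntegrable _ _

lemma deriv_F (n : ℕ) {x : ℝ} (hx : x ∈ Set.Ioo (-2:ℝ) 2) :
    HasDerivAt (fun x : ℝ => x ^ (n+1) * ((4 - x ^ 2) * Real.sqrt (4 - x ^ 2)))
      (4*((n:ℝ)+1)*x^n*Real.sqrt (4 - x ^ 2) - ((n:ℝ)+4)*x^(n+2)*Real.sqrt (4 - x ^ 2)) x := by
  have h4 : (0:ℝ) < 4 - x ^ 2 := by nlinarith [hx.1, hx.2]
  have hs_pos : 0 < Real.sqrt (4 - x ^ 2) := Real.sqrt_pos.mpr h4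
  have hss : Real.sqrt (4 - x ^ 2) * Real.sqrt (4 - x ^ 2) = 4 - x ^ 2 :=
    Real.mul_self_sqrt h4.le
  have hsq : HasDerivAt (fun x : ℝ => 4 - x ^ 2) (-(2*x)) x := by
    simpa using ((hasDerivAt_pow 2 x).const_sub 4)
  have hs : HasDerivAt (fun x : ℝ => Real.sqrt (4 - x ^ 2))
      (1 / (2 * Real.sqrt (4 - x ^ 2)) * (-(2*x))) x :=
    (Real.hasDerivAt_sqrt h4.ne').comp x hsq
  have h1 : HasDerivAt (fun x : ℝ => (4 - x ^ 2) * Real.sqrt (4 - x ^ 2))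
      (-3 * x * Real.sqrt (4 - x ^ 2)) x := by
    have hd := hsq.mul hs
    refine hd.congr_deriv ?_
    field_simp
    linear_combination (x) * Real.sq_sqrt h4.le
  have h2 := (hasDerivAt_pow (n+1) x).mul h1
  refine h2.congr_deriv ?_
  push_cast [Nat.add_sub_cancel]
  ring

lemma rec_step (n : ℕ) :
    ((n:ℝ)+4) * ∫ x in (-2:ℝ)..2, x ^ (n+2) * Real.sqrt (4 - x ^ 2)
      = 4*((n:ℝ)+1) * ∫ x in (-2:ℝ)..2, x ^ n * Real.sqrt (4 - x ^ 2) := by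
  have hcont : ContinuousOn (fun x : ℝ => x ^ (n+1) * ((4 - x ^ 2) * Real.sqrt (4 - x ^ 2)))
      (Set.Icc (-2) 2) :=
    ((continuous_pow (n+1)).mul ((by continuity : Continuous fun x : ℝ => 4 - x ^ 2).mul
      sc_cont)).continuousOn
  have hint : IntervalIntegrable
      (fun x : ℝ => 4*((n:ℝ)+1)*x^n*Real.sqrt (4 - x ^ 2) - ((n:ℝ)+4)*x^(n+2)*Real.sqrt (4 - x ^ 2))
      MeasureTheory.volume (-2) 2 := by
    apply IntervalIntegrable.sub
    · simpa [mul_assoc] using (intInt n).const_mul (4*((n:ℝ)+1))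
    · simpa [mul_assoc] using (intInt (n+2)).const_mul ((n:ℝ)+4)
  have key := integral_eq_sub_of_hasDerivAt_of_le (by norm_num : (-2:ℝ) ≤ 2)
    hcont (fun x hx => deriv_F n hx) hint
  have h2 : ((4:ℝ) - (2:ℝ)^2) = 0 := by norm_num
  have h2' : ((4:ℝ) - (-2:ℝ)^2) = 0 := by norm_num
  rw [h2, h2'] at key
  simp only [zero_mul, mul_zero, sub_zero] at key
  have hsplit : (∫ x in (-2:ℝ)..2,
      (4*((n:ℝ)+1)*x^n*Real.sqrt (4 - x ^ 2) - ((n:ℝ)+4)*x^(n+2)*Real.sqrt (4 - x ^ 2)))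
      = 4*((n:ℝ)+1) * (∫ x in (-2:ℝ)..2, x ^ n * Real.sqrt (4 - x ^ 2))
        - ((n:ℝ)+4) * ∫ x in (-2:ℝ)..2, x ^ (n+2) * Real.sqrt (4 - x ^ 2) := by
    rw [intervalIntegral.integral_sub, ← intervalIntegral.integral_const_mul,
      ← intervalIntegral.integral_const_mul]
    · congr 1 <;> · apply intervalIntegral.integral_congr; intro x _; ring
    · simpa [mul_assoc] using (intInt n).const_mul (4*((n:ℝ)+1))
    · simpa [mul_assoc] using (intInt (n+2)).const_mul ((n:ℝ)+4)
  rw [hsplit] at key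
  linarith [key]

lemma base_case : ∫ x in (-2:ℝ)..2, Real.sqrt (4 - x ^ 2) = 2 * π := by
  have h := mul_integral_comp_mul_left (c := (2:ℝ)) (a := -1) (b := 1)
    (f := fun x : ℝ => Real.sqrt (4 - x ^ 2))
  norm_num at h
  rw [← h]
  have : ∀ x : ℝ, Real.sqrt (4 - (2*x) ^ 2) = 2 * Real.sqrt (1 - x ^ 2) := by
    intro x
    rw [show (4:ℝ) - (2*x)^2 = 4 * (1 - x^2) by ring, show (4:ℝ) = 2^2 by norm_num,
      Real.sqrt_mul (by positivity), Real.sqrt_sq (by norm_num)]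
  rw [intervalIntegral.integral_congr (fun x _ => this x), intervalIntegral.integral_const_mul,
    integral_sqrt_one_sub_sq]
  ring

lemma even_mom (n : ℕ) : ∫ x in (-2:ℝ)..2, x ^ (2*n) * Real.sqrt (4 - x ^ 2)
    = 2 * π * (Nat.centralBinom n) / ((n:ℝ)+1) := by
  induction n with
  | zero => simpa [Nat.centralBinom] using base_case
  | succ n ih =>
    have h := rec_step (2*n)
    rw [ih] at h
    have hcb : ((n:ℝ)+1) * Nat.centralBinom (n+1) = 2 * (2*(n:ℝ)+1) * Nat.centralBinom n := by
      exact_mod_cast Nat.succ_mul_centralBinom_succ n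
    rw [show 2*(n+1) = 2*n+2 from by ring]
    push_cast at h ⊢
    field_simp at h ⊢
    nlinarith [h, hcb, Real.pi_pos]

theorem semicircle_moments (k : ℕ) :
    (Even k →
      ∫ x in (-2:ℝ)..2, x ^ k * (1 / (2 * π) * Real.sqrt (4 - x ^ 2))
        = (Nat.choose k (k / 2) : ℝ) / ((k / 2 : ℕ) + 1)) ∧
    (Odd k →
      ∫ x in (-2:ℝ)..2, x ^ k * (1 / (2 * π) * Real.sqrt (4 - x ^ 2)) = 0) := by
  have hpull : (∫ x in (-2:ℝ)..2, x ^ k * (1 / (2 * π) * Real.sqrt (4 - x ^ 2)))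
      = 1 / (2*π) * ∫ x in (-2:ℝ)..2, x ^ k * Real.sqrt (4 - x ^ 2) := by
    rw [← intervalIntegral.integral_const_mul]
    apply intervalIntegral.integral_congr; intro x _; ring
  constructor
  · rintro ⟨n, rfl⟩
    have hk : n + n = 2 * n := by ring
    rw [hpull, hk, even_mom n]
    have hdiv : (2*n) / 2 = n := by omega
    rw [hdiv]
    have : (Nat.choose (2*n) n : ℝ) = Nat.centralBinom n := by
      rw [Nat.centralBinom]
    rw [this]
    field_simp [Real.pi_ne_zero]
  · intro hk
    have hodd := intervalIntegral.integral_comp_neg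
      (a := (-2:ℝ)) (b := 2) (f := fun x : ℝ => x ^ k * Real.sqrt (4 - x ^ 2))
    simp only [neg_neg] at hodd
    have heq : (∫ x in (-2:ℝ)..2, (-x) ^ k * Real.sqrt (4 - (-x) ^ 2))
        = ∫ x in (-2:ℝ)..2, -(x ^ k * Real.sqrt (4 - x ^ 2)) := by
      apply intervalIntegral.integral_congr; intro x _
      show (-x) ^ k * Real.sqrt (4 - (-x) ^ 2) = -(x ^ k * Real.sqrt (4 - x ^ 2))
      rw [hk.neg_pow, neg_sq]; ring
    rw [heq, intervalIntegral.integral_neg] at hodd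
    rw [hpull]
    have : (∫ x in (-2:ℝ)..2, x ^ k * Real.sqrt (4 - x ^ 2)) = 0 := by linarith
    rw [this, mul_zero]
end

section
/- If two finite nonnegative measures μ and ν on ℝ have equal Stieltjes transforms, g_μ(z) = g_ν(z) for all z with Im z > 0, then μ = ν. -/
open MeasureTheory Complex Filter Topology

noncomputable section StieltjesAux

lemma poisson_integrable {y : ℝ} (hy : 0 < y) (t : ℝ) :
    Integrable (fun x : ℝ => y / ((x - t) ^ 2 + y ^ 2)) := by
  have h : (fun x : ℝ => y / ((x - t) ^ 2 + y ^ 2))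
      = fun x => y⁻¹ * (1 + ((x - t) * y⁻¹) ^ 2)⁻¹ := by
    funext x
    rw [mul_pow]
    field_simp
    ring_nf
  rw [h]
  exact (((integrable_inv_one_add_sq.comp_mul_right' (inv_ne_zero hy.ne')).comp_sub_right
    t)).const_mul _

lemma poisson_cov {y : ℝ} (hy : 0 < y) (t : ℝ) (ψ : ℝ → ℝ) :
    ∫ x, ψ x * (y / ((x - t) ^ 2 + y ^ 2))
      = ∫ u, ψ (y * u + t) * (1 + u ^ 2)⁻¹ := by
  set F : ℝ → ℝ := fun x => ψ x * (y / ((x - t) ^ 2 + y ^ 2)) with hF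
  have h1 : ∫ u, F (y * u + t) = |y⁻¹| • ∫ x, F x := by
    have := MeasureTheory.Measure.integral_comp_mul_left (fun x => F (x + t)) y
    simpa [MeasureTheory.integral_add_right_eq_self (μ := volume) F t] using this
  have h2 : ∀ u : ℝ, F (y * u + t) = y⁻¹ * (ψ (y * u + t) * (1 + u ^ 2)⁻¹) := by
    intro u
    have h0 : (y * u + t - t) ^ 2 + y ^ 2 = y ^ 2 * (1 + u ^ 2) := by ring
    have hne : (1:ℝ) + u ^ 2 ≠ 0 := by positivity
    simp only [hF, h0]
    field_simp
  have h3 : ∫ u, F (y * u + t) = y⁻¹ * ∫ u, ψ (y * u + t) * (1 + u ^ 2)⁻¹ := by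
    simp_rw [h2]
    exact MeasureTheory.integral_const_mul _ _
  have hy' : |y⁻¹| = y⁻¹ := abs_of_pos (inv_pos.mpr hy)
  rw [h3, hy', smul_eq_mul] at h1
  exact mul_left_cancel₀ (inv_ne_zero hy.ne') h1.symm

lemma kernel_pos {y : ℝ} (hy : 0 < y) (x t : ℝ) : 0 < y / ((x - t) ^ 2 + y ^ 2) :=
  div_pos hy (by positivity)

lemma kernel_continuous {y : ℝ} (hy : 0 < y) :
    Continuous (fun p : ℝ × ℝ => y / ((p.2 - p.1) ^ 2 + y ^ 2)) := by
  apply continuous_const.div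
  · continuity
  · intro p
    positivity

lemma poisson_mul_integrable {ψ : ℝ → ℝ} (hψc : Continuous ψ)
    {C : ℝ} (hC : ∀ x, |ψ x| ≤ C) {y : ℝ} (hy : 0 < y) (t : ℝ) :
    Integrable (fun x => ψ x * (y / ((x - t) ^ 2 + y ^ 2))) := by
  apply Integrable.mono' ((poisson_integrable hy t).const_mul C)
  · exact (hψc.mul (continuous_const.div (by continuity)
      (fun x => by positivity))).aestronglyMeasurable
  · filter_upwards with x
    rw [norm_mul, Real.norm_eq_abs, Real.norm_eq_abs,
      abs_of_pos (kernel_pos hy x t)]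
    exact mul_le_mul_of_nonneg_right (hC x) (kernel_pos hy x t).le

lemma poisson_norm_integral_le {ψ : ℝ → ℝ} (hψc : Continuous ψ)
    {C : ℝ} (hC : ∀ x, |ψ x| ≤ C) {y : ℝ} (hy : 0 < y) (t : ℝ) :
    ∫ x, ‖ψ x * (y / ((x - t) ^ 2 + y ^ 2))‖ ≤ C * Real.pi := by
  have hint : Integrable (fun x => ‖ψ x * (y / ((x - t) ^ 2 + y ^ 2))‖) :=
    (poisson_mul_integrable hψc hC hy t).norm
  calc ∫ x, ‖ψ x * (y / ((x - t) ^ 2 + y ^ 2))‖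
      ≤ ∫ x, C * (y / ((x - t) ^ 2 + y ^ 2)) := by
        apply integral_mono hint ((poisson_integrable hy t).const_mul C)
        intro x
        simp only []
        rw [norm_mul, Real.norm_eq_abs, Real.norm_eq_abs,
          abs_of_pos (kernel_pos hy x t)]
        exact mul_le_mul_of_nonneg_right (hC x) (kernel_pos hy x t).le
    _ = C * Real.pi := by
        rw [poisson_cov hy t (fun _ => C), MeasureTheory.integral_const_mul,
          integral_univ_inv_one_add_sq]

lemma integrand_integrable (μ : Measure ℝ) [IsFiniteMeasure μ] {ψ : ℝ → ℝ} (hψc : Continuous ψ)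
    {C : ℝ} (hC : ∀ x, |ψ x| ≤ C) {y : ℝ} (hy : 0 < y) :
    Integrable (fun p : ℝ × ℝ => ψ p.2 * (y / ((p.2 - p.1) ^ 2 + y ^ 2)))
      (μ.prod volume) := by
  rw [integrable_prod_iff]
  · constructor
    · filter_upwards with t
      exact poisson_mul_integrable hψc hC hy t
    · apply Integrable.mono' (integrable_const (C * Real.pi) (μ := μ))
      · apply StronglyMeasurable.aestronglyMeasurable
        apply MeasureTheory.StronglyMeasurable.integral_prod_right
          (f := fun t x => ‖ψ x * (y / ((x - t) ^ 2 + y ^ 2))‖)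
        exact ((hψc.comp continuous_snd).mul (kernel_continuous hy)).norm.stronglyMeasurable
      · filter_upwards with t
        rw [Real.norm_eq_abs, _root_.abs_of_nonneg (integral_nonneg (fun x => norm_nonneg _))]
        exact poisson_norm_integral_le hψc hC hy t
  · exact ((hψc.comp continuous_snd).mul (kernel_continuous hy)).aestronglyMeasurable

lemma poisson_limit {ψ : ℝ → ℝ} (hψc : Continuous ψ) {C : ℝ} (hC : ∀ x, |ψ x| ≤ C) (t : ℝ) :
    Tendsto (fun y : ℝ => ∫ u, ψ (y * u + t) * (1 + u ^ 2)⁻¹) (𝓝[>] 0)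
      (𝓝 (Real.pi * ψ t)) := by
  have h0 : Real.pi * ψ t = ∫ u : ℝ, ψ t * (1 + u ^ 2)⁻¹ := by
    rw [MeasureTheory.integral_const_mul, integral_univ_inv_one_add_sq]; ring
  rw [h0]
  apply tendsto_integral_filter_of_dominated_convergence (fun u : ℝ => C * (1 + u ^ 2)⁻¹)
  · filter_upwards with y
    exact ((hψc.comp ((continuous_const.mul continuous_id).add continuous_const)).mul
      ((continuous_const.add (continuous_pow 2)).inv₀
        (fun u => (by positivity : (0:ℝ) < 1 + u ^ 2).ne'))).aestronglyMeasurable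
  · filter_upwards with y
    filter_upwards with u
    have h1 : (0:ℝ) < 1 + u ^ 2 := by positivity
    rw [norm_mul, Real.norm_eq_abs, Real.norm_eq_abs, abs_of_pos (inv_pos.mpr h1)]
    exact mul_le_mul_of_nonneg_right (hC _) (inv_pos.mpr h1).le
  · exact integrable_inv_one_add_sq.const_mul C
  · filter_upwards with u
    have h2 : Tendsto (fun y : ℝ => y * u + t) (𝓝[>] 0) (𝓝 t) := by
      have : Tendsto (fun y : ℝ => y * u + t) (𝓝 0) (𝓝 (0 * u + t)) :=
        ((continuous_id.mul continuous_const).add continuous_const).tendsto 0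
      simpa using this.mono_left nhdsWithin_le_nhds
    exact ((hψc.tendsto t).comp h2).mul tendsto_const_nhds

lemma resolvent_integrable (μ : Measure ℝ) [IsFiniteMeasure μ] {z : ℂ} (hz : z.im ≠ 0) :
    Integrable (fun t : ℝ => ((t : ℂ) - z)⁻¹) μ := by
  have hne : ∀ t : ℝ, ((t : ℂ) - z) ≠ 0 := by
    intro t ht
    apply hz
    have := congrArg Complex.im ht
    simpa using this.symm
  apply Integrable.mono' (integrable_const (|z.im|⁻¹) (μ := μ))
  · exact (Continuous.inv₀ (by continuity) hne).aestronglyMeasurable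
  · filter_upwards with t
    rw [norm_inv]
    apply inv_anti₀ (abs_pos.mpr hz)
    calc |z.im| = |((t : ℂ) - z).im| := by simp
    _ ≤ ‖(t : ℂ) - z‖ := Complex.abs_im_le_norm _

lemma poisson_eq (μ ν : Measure ℝ) [IsFiniteMeasure μ] [IsFiniteMeasure ν]
    (h : ∀ z : ℂ, 0 < z.im →
      (∫ t, ((t : ℂ) - z)⁻¹ ∂μ) = ∫ t, ((t : ℂ) - z)⁻¹ ∂ν)
    (x : ℝ) {y : ℝ} (hy : 0 < y) :
    ∫ t, y / ((x - t) ^ 2 + y ^ 2) ∂μ = ∫ t, y / ((x - t) ^ 2 + y ^ 2) ∂ν := by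
  set z : ℂ := ⟨x, y⟩ with hz
  have hzim : z.im = y := rfl
  have hkey : ∀ t : ℝ, y / ((x - t) ^ 2 + y ^ 2) = (((t : ℂ) - z)⁻¹).im := by
    intro t
    rw [Complex.inv_im, Complex.normSq_apply]
    simp [hz, Complex.sub_re, Complex.sub_im]
    rw [show ((t - x) * (t - x) + y * y) = ((x - t) ^ 2 + y ^ 2) by ring]
  simp_rw [hkey]
  have h1 := integral_im (𝕜 := ℂ) (resolvent_integrable μ (by rw [hzim]; exact hy.ne'))
  have h2 := integral_im (𝕜 := ℂ) (resolvent_integrable ν (z := z) (by rw [hzim]; exact hy.ne'))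
  simp only [RCLike.im_to_complex] at h1 h2
  rw [h1, h2, h z (by rw [hzim]; exact hy)]

lemma integral_eq_of_poisson (μ ν : Measure ℝ) [IsFiniteMeasure μ] [IsFiniteMeasure ν]
    (h : ∀ z : ℂ, 0 < z.im →
      (∫ t, ((t : ℂ) - z)⁻¹ ∂μ) = ∫ t, ((t : ℂ) - z)⁻¹ ∂ν)
    {ψ : ℝ → ℝ} (hψc : Continuous ψ) {C : ℝ} (hC : ∀ x, |ψ x| ≤ C) :
    ∫ t, ψ t ∂μ = ∫ t, ψ t ∂ν := by
  -- The Poisson convolution, as a function of (y, t).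
  set I : ℝ → ℝ → ℝ := fun y t => ∫ x, ψ x * (y / ((x - t) ^ 2 + y ^ 2)) with hI
  -- dominated convergence of ∫ I y t ∂μ as y → 0⁺
  have key : ∀ (ρ : Measure ℝ), IsFiniteMeasure ρ →
      Tendsto (fun y : ℝ => ∫ t, I y t ∂ρ) (𝓝[>] 0) (𝓝 (∫ t, Real.pi * ψ t ∂ρ)) := by
    intro ρ hρ
    apply tendsto_integral_filter_of_dominated_convergence (fun _ : ℝ => C * Real.pi)
    · filter_upwards [self_mem_nhdsWithin] with y (hy : 0 < y)
      apply StronglyMeasurable.aestronglyMeasurable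
      apply MeasureTheory.StronglyMeasurable.integral_prod_right
        (f := fun t x => ψ x * (y / ((x - t) ^ 2 + y ^ 2)))
      exact ((hψc.comp continuous_snd).mul (kernel_continuous hy)).stronglyMeasurable
    · filter_upwards [self_mem_nhdsWithin] with y (hy : 0 < y)
      filter_upwards with t
      calc ‖I y t‖ ≤ ∫ x, ‖ψ x * (y / ((x - t) ^ 2 + y ^ 2))‖ :=
            norm_integral_le_integral_norm _
        _ ≤ C * Real.pi := poisson_norm_integral_le hψc hC hy t
    · exact integrable_const _
    · filter_upwards with t
      have he : ∀ᶠ y in 𝓝[>] (0:ℝ),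
          I y t = ∫ u, ψ (y * u + t) * (1 + u ^ 2)⁻¹ := by
        filter_upwards [self_mem_nhdsWithin] with y (hy : 0 < y)
        exact poisson_cov hy t ψ
      exact Tendsto.congr' (he.mono fun y hy => hy.symm) (poisson_limit hψc hC t)
  -- for each y > 0, the two integrals coincide by Fubini
  have heq : ∀ᶠ y in 𝓝[>] (0:ℝ), (∫ t, I y t ∂μ) = ∫ t, I y t ∂ν := by
    filter_upwards [self_mem_nhdsWithin] with y (hy : 0 < y)
    have fub : ∀ (ρ : Measure ℝ), IsFiniteMeasure ρ → (∫ t, I y t ∂ρ)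
        = ∫ x, ψ x * (∫ t, y / ((x - t) ^ 2 + y ^ 2) ∂ρ) := by
      intro ρ hρ
      have := MeasureTheory.integral_integral_swap
        (f := fun t x => ψ x * (y / ((x - t) ^ 2 + y ^ 2)))
        (μ := ρ) (ν := volume) (integrand_integrable ρ hψc hC hy)
      rw [hI]
      simp only []
      rw [this]
      congr 1
      funext x
      exact MeasureTheory.integral_const_mul _ _
    rw [fub μ inferInstance, fub ν inferInstance]
    congr 1
    funext x
    rw [poisson_eq μ ν h x hy]
  have hμ := key μ inferInstance
  have hν := key ν inferInstance
  have := tendsto_nhds_unique (hμ.congr' heq) hν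
  rw [MeasureTheory.integral_const_mul, MeasureTheory.integral_const_mul] at this
  exact mul_left_cancel₀ Real.pi_ne_zero this

end StieltjesAux

theorem stieltjes_transform_injective (μ ν : Measure ℝ)
    [IsFiniteMeasure μ] [IsFiniteMeasure ν]
    (h : ∀ z : ℂ, 0 < z.im →
      (∫ t, ((t : ℂ) - z)⁻¹ ∂μ) = ∫ t, ((t : ℂ) - z)⁻¹ ∂ν) :
    μ = ν := by
  apply MeasureTheory.ext_of_forall_lintegral_eq_of_IsFiniteMeasure
  intro f
  obtain ⟨C, hC⟩ := f.bounded
  set ψ : ℝ → ℝ := fun x => (f x : ℝ) with hψ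
  have hψc : Continuous ψ := NNReal.continuous_coe.comp f.continuous
  have hbd : ∀ x, |ψ x| ≤ C + (f 0 : ℝ) := by
    intro x
    have h1 : dist (f x) (f 0) ≤ C := hC x 0
    rw [NNReal.dist_eq] at h1
    have : |ψ x| = ψ x := _root_.abs_of_nonneg (f x).coe_nonneg
    rw [this]
    calc (ψ x : ℝ) = ((f x : ℝ) - (f 0 : ℝ)) + (f 0 : ℝ) := by ring
      _ ≤ |(f x : ℝ) - (f 0 : ℝ)| + (f 0 : ℝ) := by
          exact add_le_add_left (le_abs_self _) _
      _ ≤ C + (f 0 : ℝ) := add_le_add_left h1 _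
  have hint : ∀ (ρ : Measure ℝ), IsFiniteMeasure ρ → Integrable ψ ρ := by
    intro ρ hρ
    apply Integrable.mono' (integrable_const (C + (f 0 : ℝ)) (μ := ρ))
    · exact hψc.aestronglyMeasurable
    · filter_upwards with x
      rw [Real.norm_eq_abs]
      exact hbd x
  rw [lintegral_coe_eq_integral f (hint μ inferInstance),
    lintegral_coe_eq_integral f (hint ν inferInstance)]
  congr 1
  exact integral_eq_of_poisson μ ν h hψc hbd
end

section
/- Hoffman–Wielandt inequality: if A and B are real symmetric N × N matrices with eigenvalues λ₁^A ≤ ... ≤ λ_N^A and λ₁^B ≤ ... ≤ λ_N^B (in nondecreasing order), then ∑_{i=1}^N (λ_i^A − λ_i^B)² ≤ Tr((A − B)²). -/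
open Matrix Finset

private lemma hw_perm_sum (N : ℕ) (f g : Fin N → ℝ) (σ : Equiv.Perm (Fin N)) :
    ∑ i, ∑ j, f i * g j * σ.permMatrix ℝ i j = ∑ i, f i * g (σ i) := by
  refine Finset.sum_congr rfl fun i _ => ?_
  rw [Finset.sum_eq_single (σ i)]
  · simp [Equiv.Perm.permMatrix, PEquiv.toMatrix_apply, Equiv.toPEquiv_apply]
  · intro j _ hj
    have : ¬ σ i = j := fun h => hj h.symm
    simp [Equiv.Perm.permMatrix, PEquiv.toMatrix_apply, Equiv.toPEquiv_apply, this]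
  · simp

private lemma hw_ds_rearrange (N : ℕ) (f g : Fin N → ℝ) (hf : Monotone f) (hg : Monotone g)
    (S : Matrix (Fin N) (Fin N) ℝ) (hS : S ∈ doublyStochastic ℝ (Fin N)) :
    ∑ i, ∑ j, f i * g j * S i j ≤ ∑ i, f i * g i := by
  obtain ⟨w, hw0, hw1, hwS⟩ := exists_eq_sum_perm_of_mem_doublyStochastic hS
  have hmono : Monovary f g := hf.monovary hg
  have hSe : ∀ i j, S i j = ∑ σ : Equiv.Perm (Fin N), w σ * σ.permMatrix ℝ i j := by
    intro i j
    rw [← hwS]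
    simp [Matrix.sum_apply]
  calc ∑ i, ∑ j, f i * g j * S i j
      = ∑ i, ∑ j, ∑ p : Equiv.Perm (Fin N), w p * (f i * g j * p.permMatrix ℝ i j) := by
        refine Finset.sum_congr rfl fun i _ => Finset.sum_congr rfl fun j _ => ?_
        rw [hSe, Finset.mul_sum]
        exact Finset.sum_congr rfl fun p _ => by ring
    _ = ∑ p : Equiv.Perm (Fin N), ∑ i, ∑ j, w p * (f i * g j * p.permMatrix ℝ i j) := by
        rw [show (∑ i, ∑ j, ∑ p : Equiv.Perm (Fin N), w p * (f i * g j * p.permMatrix ℝ i j))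
            = ∑ i, ∑ p : Equiv.Perm (Fin N), ∑ j, w p * (f i * g j * p.permMatrix ℝ i j) from
          Finset.sum_congr rfl fun i _ => Finset.sum_comm]
        exact Finset.sum_comm
    _ = ∑ p : Equiv.Perm (Fin N), w p * ∑ i, ∑ j, f i * g j * p.permMatrix ℝ i j := by
        refine Finset.sum_congr rfl fun p _ => ?_
        rw [Finset.mul_sum]
        exact Finset.sum_congr rfl fun i _ => (Finset.mul_sum _ _ _).symm
    _ = ∑ σ : Equiv.Perm (Fin N), w σ * ∑ i, f i * g (σ i) := by
        exact Finset.sum_congr rfl fun p _ => by rw [hw_perm_sum]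
    _ ≤ ∑ σ : Equiv.Perm (Fin N), w σ * ∑ i, f i * g i := by
        refine Finset.sum_le_sum fun σ _ => ?_
        exact mul_le_mul_of_nonneg_left (hmono.sum_mul_comp_perm_le_sum_mul) (hw0 σ)
    _ = ∑ i, f i * g i := by rw [← Finset.sum_mul, hw1, one_mul]

private lemma hw_trace_diag (N : ℕ) (lam mu : Fin N → ℝ) (W : Matrix (Fin N) (Fin N) ℝ) :
    trace (diagonal lam * W * diagonal mu * star W)
      = ∑ i, ∑ j, lam i * mu j * (W i j) ^ 2 := by
  simp only [Matrix.trace, Matrix.diag_apply, Matrix.mul_apply, Matrix.diagonal_apply,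
    Matrix.star_apply, star_trivial, ite_mul, zero_mul, mul_ite, mul_zero,
    Finset.sum_ite_eq, Finset.sum_ite_eq', Finset.mem_univ, if_true]
  refine Finset.sum_congr rfl fun i _ => Finset.sum_congr rfl fun j _ => ?_
  ring

theorem hoffman_wielandt (N : ℕ) (A B : Matrix (Fin N) (Fin N) ℝ)
    (hA : A.IsHermitian) (hB : B.IsHermitian) :
    ∑ i : Fin N,
        ((hA.eigenvalues ∘ Tuple.sort hA.eigenvalues) i
          - (hB.eigenvalues ∘ Tuple.sort hB.eigenvalues) i) ^ 2
      ≤ Matrix.trace ((A - B) * (A - B)) := by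
  set U : Matrix (Fin N) (Fin N) ℝ := (hA.eigenvectorUnitary : Matrix (Fin N) (Fin N) ℝ) with hUdef
  set V : Matrix (Fin N) (Fin N) ℝ := (hB.eigenvectorUnitary : Matrix (Fin N) (Fin N) ℝ) with hVdef
  set lam : Fin N → ℝ := hA.eigenvalues with hlam
  set mu : Fin N → ℝ := hB.eigenvalues with hmu
  set σ : Equiv.Perm (Fin N) := Tuple.sort lam with hσ
  set τ : Equiv.Perm (Fin N) := Tuple.sort mu with hτ
  have hU1 : U * star U = 1 := mem_unitaryGroup_iff.mp (hA.eigenvectorUnitary).2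
  have hU2 : star U * U = 1 := mem_unitaryGroup_iff'.mp (hA.eigenvectorUnitary).2
  have hV1 : V * star V = 1 := mem_unitaryGroup_iff.mp (hB.eigenvectorUnitary).2
  have hV2 : star V * V = 1 := mem_unitaryGroup_iff'.mp (hB.eigenvectorUnitary).2
  have hAd : A = U * diagonal lam * star U := by simpa using hA.spectral_theorem
  have hBd : B = V * diagonal mu * star V := by simpa using hB.spectral_theorem
  set W : Matrix (Fin N) (Fin N) ℝ := star U * V with hW
  have hsW : star W = star V * U := by rw [hW, StarMul.star_mul, star_star]
  have hW1 : W * star W = 1 := by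
    rw [hW, hsW, Matrix.mul_assoc, ← Matrix.mul_assoc V, hV1, one_mul, hU2]
  have hW2 : star W * W = 1 := by
    rw [hW, hsW, Matrix.mul_assoc, ← Matrix.mul_assoc U, hU1, one_mul, hV2]
  -- the doubly stochastic matrix
  set S : Matrix (Fin N) (Fin N) ℝ := Matrix.of (fun i j => (W i j) ^ 2) with hS
  have hSds : S ∈ doublyStochastic ℝ (Fin N) := by
    rw [mem_doublyStochastic_iff_sum]
    refine ⟨fun i j => sq_nonneg _, fun i => ?_, fun j => ?_⟩
    · have := congrArg (fun M : Matrix (Fin N) (Fin N) ℝ => M i i) hW1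
      simp only [Matrix.mul_apply, Matrix.star_apply, star_trivial, Matrix.one_apply_eq] at this
      simpa [hS, sq] using this
    · have := congrArg (fun M : Matrix (Fin N) (Fin N) ℝ => M j j) hW2
      simp only [Matrix.mul_apply, Matrix.star_apply, star_trivial, Matrix.one_apply_eq] at this
      simpa [hS, sq] using this
  -- trace of A*B
  have tconj : ∀ X : Matrix (Fin N) (Fin N) ℝ, trace (U * X * star U) = trace X := by
    intro X
    rw [Matrix.trace_mul_cycle, hU2, one_mul]
  have hABe : A * B = U * (diagonal lam * W * diagonal mu * star W) * star U := by
    rw [hAd, hBd, hsW, hW]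
    simp only [Matrix.mul_assoc]
    rw [hU1, mul_one]
  have tAB : trace (A * B) = ∑ i, ∑ j, lam i * mu j * S i j := by
    rw [hABe, tconj, hw_trace_diag]
    rfl
  have tA : trace (A * A) = ∑ i, lam i ^ 2 := by
    conv_lhs => rw [hAd]
    rw [show U * diagonal lam * star U * (U * diagonal lam * star U)
        = U * (diagonal lam * diagonal lam) * star U by
      simp only [Matrix.mul_assoc]
      rw [← Matrix.mul_assoc (star U) U, hU2, one_mul]]
    rw [tconj, diagonal_mul_diagonal, trace_diagonal]
    simp [sq]
  have tB : trace (B * B) = ∑ i, mu i ^ 2 := by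
    have tconjV : ∀ X : Matrix (Fin N) (Fin N) ℝ, trace (V * X * star V) = trace X := by
      intro X
      rw [Matrix.trace_mul_cycle, hV2, one_mul]
    conv_lhs => rw [hBd]
    rw [show V * diagonal mu * star V * (V * diagonal mu * star V)
        = V * (diagonal mu * diagonal mu) * star V by
      simp only [Matrix.mul_assoc]
      rw [← Matrix.mul_assoc (star V) V, hV2, one_mul]]
    rw [tconjV, diagonal_mul_diagonal, trace_diagonal]
    simp [sq]
  -- reindexed doubly stochastic matrix
  set S' : Matrix (Fin N) (Fin N) ℝ := Matrix.of (fun i j => S (σ i) (τ j)) with hS'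
  have hS'ds : S' ∈ doublyStochastic ℝ (Fin N) := by
    rw [mem_doublyStochastic_iff_sum]
    refine ⟨fun i j => nonneg_of_mem_doublyStochastic hSds, fun i => ?_, fun j => ?_⟩
    · have := sum_row_of_mem_doublyStochastic hSds (σ i)
      rw [← Equiv.sum_comp τ (fun j => S (σ i) j)] at this
      exact this
    · have := sum_col_of_mem_doublyStochastic hSds (τ j)
      rw [← Equiv.sum_comp σ (fun i => S i (τ j))] at this
      exact this
  -- the key inequality
  have key : trace (A * B) ≤ ∑ i, lam (σ i) * mu (τ i) := by
    rw [tAB]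
    have e1 : ∑ i, ∑ j, lam i * mu j * S i j
        = ∑ i, ∑ j, lam (σ i) * mu (τ j) * S' i j := by
      rw [← Equiv.sum_comp σ (fun i => ∑ j, lam i * mu j * S i j)]
      refine Finset.sum_congr rfl fun i _ => ?_
      rw [← Equiv.sum_comp τ (fun j => lam (σ i) * mu j * S (σ i) j)]
      rfl
    rw [e1]
    exact hw_ds_rearrange N (lam ∘ σ) (mu ∘ τ) (Tuple.monotone_sort lam)
      (Tuple.monotone_sort mu) S' hS'ds
  -- expand the trace of the square
  have texp : trace ((A - B) * (A - B))
      = trace (A * A) - 2 * trace (A * B) + trace (B * B) := by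
    have hBA : trace (B * A) = trace (A * B) := trace_mul_comm B A
    rw [sub_mul, mul_sub, mul_sub, trace_sub, trace_sub, trace_sub, hBA]
    ring
  have sumlam : ∑ i, lam (σ i) ^ 2 = ∑ i, lam i ^ 2 := Equiv.sum_comp σ (fun i => lam i ^ 2)
  have summu : ∑ i, mu (τ i) ^ 2 = ∑ i, mu i ^ 2 := Equiv.sum_comp τ (fun i => mu i ^ 2)
  have expand : ∑ i : Fin N, ((lam ∘ σ) i - (mu ∘ τ) i) ^ 2
      = ∑ i, lam i ^ 2 - 2 * ∑ i, lam (σ i) * mu (τ i) + ∑ i, mu i ^ 2 := by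
    rw [← sumlam, ← summu]
    simp only [Function.comp_apply, sub_sq]
    rw [Finset.sum_add_distrib, Finset.sum_sub_distrib,
      show (2:ℝ) * ∑ i, lam (σ i) * mu (τ i) = ∑ i, 2 * lam (σ i) * mu (τ i) from by
        rw [Finset.mul_sum]; exact Finset.sum_congr rfl fun i _ => by ring]
  show ∑ i : Fin N, ((lam ∘ σ) i - (mu ∘ τ) i) ^ 2 ≤ trace ((A - B) * (A - B))
  rw [expand, texp, tA, tB]
  linarith [key]
end
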